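/- The determinant of an n×n matrix of n² independent indeterminates is an irreducible polynomial over any field K (for n ≥ 1), since it is linear (degree at most 1) in each variable. -/

import Mathlib

open MvPolynomial Matrix

noncomputable section DetIrredAux

variable (K : Type*) [Field K] (n : ℕ)

/-- The generic `n × n` matrix. -/
def genM : Matrix (Fin n) (Fin n) (MvPolynomial (Fin n × Fin n) K) :=
  Matrix.of fun i j => X (i, j)

variable {K n}

lemma genD_ne_zero : (genM K n).det ≠ 0 := by
  intro h0
  have hev : eval (fun p : Fin n × Fin n => if p.1 = p.2 then (1 : K) else 0) (genM K n).det
      = 1 := by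
    have h := (eval (fun p : Fin n × Fin n => if p.1 = p.2 then (1 : K) else 0)).map_det
      (genM K n)
    have hM : (eval (fun p : Fin n × Fin n => if p.1 = p.2 then (1 : K) else 0)).mapMatrix
        (genM K n) = 1 := by
      refine Matrix.ext fun p q => ?_
      simp [genM, Matrix.one_apply]
    rw [h, hM, Matrix.det_one]
  rw [h0, map_zero] at hev
  exact zero_ne_one hev

/-- Scale row `i` by an auxiliary variable. -/
def rowScale (i : Fin n) :
    MvPolynomial (Fin n × Fin n) K →ₐ[K] Polynomial (MvPolynomial (Fin n × Fin n) K) :=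
  aeval fun p => if p.1 = i then Polynomial.C (X p) * Polynomial.X else Polynomial.C (X p)

lemma rowScale_genD (i : Fin n) :
    rowScale i (genM K n).det = Polynomial.X * Polynomial.C (genM K n).det := by
  have h : rowScale i (genM K n).det = Matrix.det ((genM K n).map (rowScale i)) :=
    (rowScale i).toRingHom.map_det (genM K n)
  have hM : (genM K n).map (rowScale i) =
      Matrix.updateRow ((genM K n).map Polynomial.C) i
        ((Polynomial.X : Polynomial (MvPolynomial (Fin n × Fin n) K)) •
          fun q => Polynomial.C (X (i, q))) := by
    ext p q
    simp only [genM, Matrix.map_apply, Matrix.of_apply, rowScale, aeval_X,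
      Matrix.updateRow_apply, Pi.smul_apply, smul_eq_mul]
    by_cases hp : p = i
    · subst hp; rw [if_pos rfl, if_pos rfl, mul_comm]
    · simp [hp]
  have hcol : ((Polynomial.X : Polynomial (MvPolynomial (Fin n × Fin n) K)) •
        fun q => Polynomial.C (X (i, q) : MvPolynomial (Fin n × Fin n) K))
      = Polynomial.X • ((genM K n).map Polynomial.C i) := rfl
  have hC : ((genM K n).map Polynomial.C).det = Polynomial.C (genM K n).det :=
    ((Polynomial.C : MvPolynomial (Fin n × Fin n) K →+* _).map_det (genM K n)).symm
  rw [h, hM, hcol, Matrix.det_updateRow_smul, Matrix.updateRow_eq_self, hC]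

lemma eval_one_rowScale (i : Fin n) (f : MvPolynomial (Fin n × Fin n) K) :
    Polynomial.eval 1 (rowScale i f) = f := by
  have : (Polynomial.evalRingHom (1 : MvPolynomial (Fin n × Fin n) K)).comp
      (rowScale i).toRingHom = RingHom.id _ := by
    apply MvPolynomial.ringHom_ext
    · intro c
      simp [rowScale, algebraMap_eq]
    · intro p
      by_cases hp : p.1 = i <;> simp [rowScale, hp]
  exact RingHom.congr_fun this f

lemma eval_zero_rowScale (i : Fin n) (f : MvPolynomial (Fin n × Fin n) K) :
    Polynomial.eval 0 (rowScale i f) =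
      aeval (fun p : Fin n × Fin n => if p.1 = i then 0 else X p) f := by
  have : (Polynomial.evalRingHom (0 : MvPolynomial (Fin n × Fin n) K)).comp
      (rowScale i).toRingHom =
      (aeval (fun p : Fin n × Fin n => if p.1 = i then 0 else X p)).toRingHom := by
    apply MvPolynomial.ringHom_ext
    · intro c
      simp [rowScale, algebraMap_eq]
    · intro p
      by_cases hp : p.1 = i <;> simp [rowScale, hp]
  exact RingHom.congr_fun this f

lemma rowScale_ne_zero (i : Fin n) {f : MvPolynomial (Fin n × Fin n) K} (hf : f ≠ 0) :
    rowScale i f ≠ 0 := fun h0 =>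
  hf (by rw [← eval_one_rowScale i f, h0, Polynomial.eval_zero])

lemma natDegree_zero_vars {i : Fin n} {f : MvPolynomial (Fin n × Fin n) K}
    (h : (rowScale i f).natDegree = 0) : ∀ j, (i, j) ∉ f.vars := by
  classical
  obtain ⟨c, hc⟩ := Polynomial.natDegree_eq_zero.mp h
  have h1 : f = c := by rw [← eval_one_rowScale i f, ← hc, Polynomial.eval_C]
  have h0 : aeval (fun p : Fin n × Fin n => if p.1 = i then 0 else X p) f = c := by
    rw [← eval_zero_rowScale i f, ← hc, Polynomial.eval_C]
  have hbind : f = bind₁ (fun p : Fin n × Fin n => if p.1 = i then 0 else X p) f := by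
    rw [bind₁, h0, ← h1]
  intro j hj
  have hv := vars_bind₁ (fun p : Fin n × Fin n => if p.1 = i then 0 else X p) f
  rw [← hbind] at hv
  obtain ⟨p, -, hp⟩ := Finset.mem_biUnion.mp (hv hj)
  by_cases h' : p.1 = i
  · rw [if_pos h'] at hp; simp [vars_0] at hp
  · rw [if_neg h'] at hp
    rw [vars_X] at hp
    rw [Finset.mem_singleton] at hp
    exact h' (by rw [← hp])

/-- For any factorization of the generic determinant, each row's variables occur in at most
one of the two factors. -/
lemma row_avoid {f g : MvPolynomial (Fin n × Fin n) K} (hf : f ≠ 0) (hg : g ≠ 0)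
    (h : (genM K n).det = f * g) (i : Fin n) :
    (∀ j, (i, j) ∉ f.vars) ∨ (∀ j, (i, j) ∉ g.vars) := by
  have hsum : (rowScale i f).natDegree + (rowScale i g).natDegree = 1 := by
    have hmul : rowScale i f * rowScale i g = Polynomial.X * Polynomial.C (genM K n).det := by
      rw [← _root_.map_mul, ← h, rowScale_genD]
    have := Polynomial.natDegree_mul (rowScale_ne_zero i hf) (rowScale_ne_zero i hg)
    rw [hmul, mul_comm, Polynomial.natDegree_C_mul_X _ genD_ne_zero] at this
    omega
  have hcase : (rowScale i f).natDegree = 0 ∨ (rowScale i g).natDegree = 0 := by omega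
  rcases hcase with h' | h'
  · exact Or.inl (natDegree_zero_vars h')
  · exact Or.inr (natDegree_zero_vars h')

lemma genD_swap : rename Prod.swap (genM K n).det = (genM K n).det := by
  have h : rename (Prod.swap : Fin n × Fin n → Fin n × Fin n) (genM K n).det
      = Matrix.det ((genM K n).map (rename Prod.swap)) :=
    (rename Prod.swap).toRingHom.map_det (genM K n)
  have hM : (genM K n).map (rename (Prod.swap : Fin n × Fin n → Fin n × Fin n))
      = (genM K n)ᵀ := by
    refine Matrix.ext fun p q => ?_
    simp [genM, rename_X]
  rw [h, hM, Matrix.det_transpose]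

lemma rename_swap_ne_zero {f : MvPolynomial (Fin n × Fin n) K} (hf : f ≠ 0) :
    rename (Prod.swap : Fin n × Fin n → Fin n × Fin n) f ≠ 0 := fun h0 =>
  hf (rename_injective _ Prod.swap_injective (by rw [h0, map_zero]))

lemma mem_vars_swap {f : MvPolynomial (Fin n × Fin n) K} {i j : Fin n}
    (h : (i, j) ∈ f.vars) :
    (j, i) ∈ (rename (Prod.swap : Fin n × Fin n → Fin n × Fin n) f).vars := by
  classical
  have hid : f = rename (Prod.swap : Fin n × Fin n → Fin n × Fin n)
      (rename (Prod.swap : Fin n × Fin n → Fin n × Fin n) f) := by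
    rw [rename_rename]
    have : ((Prod.swap : Fin n × Fin n → Fin n × Fin n) ∘ Prod.swap) = id := by
      funext x; simp
    rw [this, rename_id, AlgHom.id_apply]
  have hsub := vars_rename (Prod.swap : Fin n × Fin n → Fin n × Fin n)
    (rename (Prod.swap : Fin n × Fin n → Fin n × Fin n) f)
  rw [← hid] at hsub
  obtain ⟨x, hx, hxe⟩ := Finset.mem_image.mp (hsub h)
  have hxval : x = (j, i) := by
    have := congrArg Prod.swap hxe
    rwa [Prod.swap_swap] at this
  exact hxval ▸ hx

/-- For any factorization of the generic determinant, each column's variables occur in at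
most one of the two factors. -/
lemma col_avoid {f g : MvPolynomial (Fin n × Fin n) K} (hf : f ≠ 0) (hg : g ≠ 0)
    (h : (genM K n).det = f * g) (d : Fin n) :
    (∀ i, (i, d) ∉ f.vars) ∨ (∀ i, (i, d) ∉ g.vars) := by
  have h' : (genM K n).det = rename (Prod.swap : Fin n × Fin n → Fin n × Fin n) f *
      rename (Prod.swap : Fin n × Fin n → Fin n × Fin n) g := by
    rw [← genD_swap, h, _root_.map_mul]
  rcases row_avoid (rename_swap_ne_zero hf) (rename_swap_ne_zero hg) h' d with H | H
  · exact Or.inl fun i hi => H i (mem_vars_swap hi)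
  · exact Or.inr fun i hi => H i (mem_vars_swap hi)

/-- Every variable occurs in the generic determinant. -/
lemma mem_vars_genD (p : Fin n × Fin n) : p ∈ (genM K n).det.vars := by
  classical
  obtain ⟨a, d⟩ := p
  set τ : Equiv.Perm (Fin n) := Equiv.swap a d with hτ
  have hτd : τ d = a := Equiv.swap_apply_right a d
  set v : Fin n × Fin n → K := fun q => if τ q.2 = q.1 then 1 else 0 with hv
  set ψ : MvPolynomial (Fin n × Fin n) K →ₐ[K] Polynomial K :=
    aeval (fun q => if q = (a, d) then (Polynomial.X : Polynomial K) else Polynomial.C (v q))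
    with hψ
  set P : Matrix (Fin n) (Fin n) K := Matrix.of fun r s => v (r, s) with hP
  have hPperm : P = (τ⁻¹).permMatrix K := by
    ext r s
    simp only [hP, Matrix.of_apply, hv, Equiv.Perm.permMatrix, PEquiv.toMatrix_apply,
      Equiv.toPEquiv_apply, Option.mem_def, Option.some.injEq]
    by_cases h : τ s = r
    · rw [if_pos h, if_pos (by rw [← h, Equiv.Perm.inv_def, Equiv.symm_apply_apply])]
    · rw [if_neg h, if_neg (fun hs => h (by rw [← hs, Equiv.Perm.inv_def, Equiv.apply_symm_apply]))]
  have hdetP : P.det ≠ 0 := by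
    rw [hPperm, Matrix.det_permutation]
    rcases Int.units_eq_one_or (Equiv.Perm.sign τ⁻¹) with h | h <;> rw [h] <;> simp
  have hmap : ψ (genM K n).det = Matrix.det ((genM K n).map ψ) :=
    ψ.toRingHom.map_det _
  have hMat : (genM K n).map ψ =
      Matrix.updateCol (P.map Polynomial.C) d
        ((Polynomial.X : Polynomial K) • fun r => Polynomial.C (v (r, d))) := by
    refine Matrix.ext fun r s => ?_
    simp only [genM, Matrix.map_apply, Matrix.of_apply, hψ, aeval_X,
      Matrix.updateCol_apply, Pi.smul_apply, smul_eq_mul]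
    by_cases hs : s = d
    · rw [if_pos hs]
      by_cases hr : r = a
      · rw [if_pos (by rw [hr, hs]), hr]
        have h1 : v (a, d) = 1 := by simp [hv, hτd]
        rw [h1, Polynomial.C_1, mul_one]
      · rw [if_neg (by simp [Prod.ext_iff, hr])]
        have h0 : v (r, d) = 0 := by
          simp only [hv]
          exact if_neg (by rw [hτd]; exact fun h => hr h.symm)
        rw [hs, h0, Polynomial.C_0, mul_zero]
    · rw [if_neg hs, if_neg (by simp [Prod.ext_iff, hs])]
      rfl
  have hcol : ((Polynomial.X : Polynomial K) • fun r => Polynomial.C (v (r, d)))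
      = (Polynomial.X : Polynomial K) • ((P.map Polynomial.C) · d) := rfl
  have hψdet : ψ (genM K n).det = Polynomial.X * Polynomial.C P.det := by
    rw [hmap, hMat, hcol, Matrix.det_updateCol_smul]
    congr 1
    rw [Matrix.updateCol_eq_self]
    exact ((Polynomial.C : K →+* Polynomial K).map_det P).symm
  by_contra hmem
  have hcongr : ψ (genM K n).det =
      aeval (fun q : Fin n × Fin n => (Polynomial.C (v q) : Polynomial K)) (genM K n).det := by
    show eval₂Hom _ _ _ = eval₂Hom _ _ _
    refine eval₂Hom_congr' rfl ?_ rfl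
    intro q hq _
    rw [if_neg (fun h : q = (a, d) => hmem (h ▸ hq))]
  have hconst : aeval (fun q : Fin n × Fin n => (Polynomial.C (v q) : Polynomial K))
      (genM K n).det = Polynomial.C (eval v (genM K n).det) := by
    have : (aeval (fun q : Fin n × Fin n => (Polynomial.C (v q) : Polynomial K))).toRingHom =
        (Polynomial.C : K →+* Polynomial K).comp (eval v) := by
      apply MvPolynomial.ringHom_ext
      · intro c; simp [algebraMap_eq]
      · intro q; simp
    exact RingHom.congr_fun this _
  have hz : P.det = (0 : K) := by
    have h1 := hψdet.symm.trans (hcongr.trans hconst)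
    have := congrArg (fun q : Polynomial K => q.coeff 1) h1
    simpa [Polynomial.coeff_C] using this
  exact hdetP hz

end DetIrredAux

/-- The determinant of the generic `n × n` matrix of `n²` independent
indeterminates is an irreducible polynomial over any field `K`, for `n ≥ 1`. -/
theorem det_generic_matrix_irreducible (K : Type*) [Field K] (n : ℕ) (hn : 1 ≤ n) :
    Irreducible
      (Matrix.det (Matrix.of fun i j : Fin n =>
        (MvPolynomial.X (i, j) : MvPolynomial (Fin n × Fin n) K))) := by
  classical
  show Irreducible (genM K n).det
  constructor
  · -- not a unit
    intro hunit
    have h0 : eval (fun _ : Fin n × Fin n => (0 : K)) (genM K n).det = 0 := by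
      have h := (eval (fun _ : Fin n × Fin n => (0 : K))).map_det (genM K n)
      have hM : (eval (fun _ : Fin n × Fin n => (0 : K))).mapMatrix (genM K n) = 0 := by
        refine Matrix.ext fun p q => ?_
        simp [genM]
      rw [h, hM, @Matrix.det_zero _ _ _ _ _ ⟨⟨0, hn⟩⟩]
    have := hunit.map (eval (fun _ : Fin n × Fin n => (0 : K)))
    rw [h0] at this
    exact zero_ne_one (isUnit_zero_iff.mp this)
  · intro f g h
    by_contra hcon
    push_neg at hcon
    obtain ⟨hfU, hgU⟩ := hcon
    have hD : (genM K n).det ≠ 0 := genD_ne_zero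
    have hf : f ≠ 0 := fun h0 => hD (by rw [h, h0, zero_mul])
    have hg : g ≠ 0 := fun h0 => hD (by rw [h, h0, mul_zero])
    have hvars : ∀ q : MvPolynomial (Fin n × Fin n) K, q ≠ 0 → ¬IsUnit q → q.vars.Nonempty := by
      intro q hq hqU
      rw [Finset.nonempty_iff_ne_empty]
      intro hempty
      have hqC : q = MvPolynomial.C (constantCoeff q) := by
        have := aeval_eq_constantCoeff_of_vars (g := (X : Fin n × Fin n → MvPolynomial (Fin n × Fin n) K))
          (p := q) (fun i hi => by rw [hempty] at hi; exact absurd hi (Finset.notMem_empty i))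
        rwa [aeval_X_left_apply, algebraMap_eq] at this
      have hc : constantCoeff q ≠ 0 := fun hc0 => hq (by rw [hqC, hc0, map_zero])
      exact hqU (hqC ▸ (isUnit_iff_ne_zero.mpr hc).map
        (MvPolynomial.C : K →+* MvPolynomial (Fin n × Fin n) K))
    obtain ⟨⟨a, b⟩, hab⟩ := hvars f hf hfU
    obtain ⟨⟨c, d⟩, hcd⟩ := hvars g hg hgU
    have Hg : ∀ j, (a, j) ∉ g.vars := by
      rcases row_avoid hf hg h a with H | H
      · exact absurd hab (H b)
      · exact H
    have Hf : ∀ i, (i, d) ∉ f.vars := by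
      rcases col_avoid hf hg h d with H | H
      · exact H
      · exact absurd hcd (H c)
    have hmem : (a, d) ∈ ((genM K n).det).vars := mem_vars_genD (a, d)
    rw [h] at hmem
    have := vars_mul f g hmem
    rcases Finset.mem_union.mp this with H | H
    · exact Hf a H
    · exact Hg d H
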